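/- Every pseudosphere is shellable: for every nonempty finite index set P' and every family (S_i)_{i ∈ P'} of nonempty finite sets, the pseudosphere Ψ(P', S) is a pure simplicial complex of dimension |P'| − 1 whose facets admit a shelling order. -/

import Mathlib

/-- `K` is an abstract simplicial complex: a finite family of finite sets closed
under taking subsets. -/
def IsComplex {α : Type*} [DecidableEq α] (K : Finset (Finset α)) : Prop :=
  ∀ σ ∈ K, ∀ τ ⊆ σ, τ ∈ K

/-- `σ` is a facet of `K`: a simplex of `K` that is maximal under inclusion. -/
def IsFacet {α : Type*} (K : Finset (Finset α)) (σ : Finset α) : Prop :=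
  σ ∈ K ∧ ∀ τ ∈ K, σ ⊆ τ → σ = τ

/-- Given a linear ordering `φ 0, …, φ t` of facets, the family of all subsets of
`φ j` that are contained in some earlier facet `φ i`, `i < j`. -/
def ShellingComplex {α : Type*} [DecidableEq α] {t : ℕ} (φ : Fin (t + 1) → Finset α)
    (j : Fin (t + 1)) : Finset (Finset α) :=
  (φ j).powerset.filter (fun μ => ∃ i, i < j ∧ μ ⊆ φ i)

/-- `φ 0, …, φ t` is a shelling order of `K`: it enumerates the facets of `K` without
repetition, and for every `0 < j` the family of all subsets of `φ j` contained in some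
earlier facet is a pure simplicial complex of dimension `dim (φ j) - 1`. -/
def IsShellingOrder {α : Type*} [DecidableEq α] (K : Finset (Finset α)) {t : ℕ}
    (φ : Fin (t + 1) → Finset α) : Prop :=
  Function.Injective φ ∧ (∀ σ, IsFacet K σ ↔ ∃ i, φ i = σ) ∧
  ∀ j : Fin (t + 1), 0 < j →
    (∃ τ ∈ ShellingComplex φ j, τ.card = (φ j).card - 1) ∧
    (∀ τ, IsFacet (ShellingComplex φ j) τ → τ.card = (φ j).card - 1)

/-- A pure simplicial complex is shellable if its facets admit a shelling order. -/
def IsShellable {α : Type*} [DecidableEq α] (K : Finset (Finset α)) : Prop :=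
  ∃ (t : ℕ) (φ : Fin (t + 1) → Finset α), IsShellingOrder K φ

/-- The pseudosphere `Ψ(P', S)`: simplexes are the sets `{(i, v i) : i ∈ Q}` for
`Q ⊆ P'`, with one chosen value `v i ∈ S i` for each `i ∈ Q`. -/
def Pseudosphere {P V : Type*} [DecidableEq P] [DecidableEq V]
    (P' : Finset P) (S : P → Finset V) : Finset (Finset (P × V)) :=
  (P'.biUnion (fun i => (S i).image (fun v => (i, v)))).powerset.filter
    (fun σ => ∀ x ∈ σ, ∀ y ∈ σ, x.1 = y.1 → x = y)

set_option linter.unusedSectionVars false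

section PA
variable {P V : Type*} [DecidableEq P] [DecidableEq V]
variable {P' : Finset P} {S : P → Finset V} {n : ℕ}

lemma mem_pseudo {σ : Finset (P × V)} :
    σ ∈ Pseudosphere P' S ↔
      (∀ x ∈ σ, x.1 ∈ P' ∧ x.2 ∈ S x.1) ∧ (∀ x ∈ σ, ∀ y ∈ σ, x.1 = y.1 → x = y) := by
  simp only [Pseudosphere, Finset.mem_filter, Finset.mem_powerset, Finset.subset_iff,
    Finset.mem_biUnion, Finset.mem_image]
  constructor
  · rintro ⟨h1, h2⟩
    refine ⟨fun x hx => ?_, h2⟩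
    obtain ⟨i, hi, v, hv, hx'⟩ := h1 hx
    subst hx'; exact ⟨hi, hv⟩
  · rintro ⟨h1, h2⟩
    refine ⟨fun {x} hx => ⟨x.1, (h1 x hx).1, x.2, (h1 x hx).2, rfl⟩, h2⟩

/-- The facet associated to a choice function. -/
def simplexOf (e : Fin n ≃ {x // x ∈ P'}) (f : Fin n → V) : Finset (P × V) :=
  Finset.univ.image (fun k => ((e k : P), f k))

variable {e : Fin n ≃ {x // x ∈ P'}}

lemma mem_simplexOf {f : Fin n → V} {x : P × V} :
    x ∈ simplexOf e f ↔ ∃ k, ((e k : P), f k) = x := by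
  simp [simplexOf]

lemma simplexOf_mem {f : Fin n → V} (hf : ∀ k, f k ∈ S ((e k : P))) :
    simplexOf e f ∈ Pseudosphere P' S := by
  rw [mem_pseudo]
  constructor
  · intro x hx
    obtain ⟨k, rfl⟩ := mem_simplexOf.1 hx
    exact ⟨(e k).2, hf k⟩
  · intro x hx y hy hxy
    obtain ⟨k, rfl⟩ := mem_simplexOf.1 hx
    obtain ⟨l, rfl⟩ := mem_simplexOf.1 hy
    have : k = l := e.injective (Subtype.coe_injective hxy)
    subst this; rfl

lemma card_simplexOf (f : Fin n → V) : (simplexOf e f).card = n := by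
  rw [simplexOf, Finset.card_image_of_injective _ ?_, Finset.card_univ, Fintype.card_fin]
  intro k l h
  exact e.injective (Subtype.coe_injective (congrArg Prod.fst h))

lemma simplexOf_subset {f g : Fin n → V} (h : simplexOf e f ⊆ simplexOf e g) : f = g := by
  funext k
  have hm := h (mem_simplexOf.2 ⟨k, rfl⟩)
  obtain ⟨l, hl⟩ := mem_simplexOf.1 hm
  have hk : l = k := e.injective (Subtype.coe_injective (congrArg Prod.fst hl))
  subst hk
  exact (congrArg Prod.snd hl).symm

lemma exists_ext (hS : ∀ i ∈ P', (S i).Nonempty) {σ : Finset (P × V)}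
    (hσ : σ ∈ Pseudosphere P' S) :
    ∃ f : Fin n → V, (∀ k, f k ∈ S ((e k : P))) ∧ σ ⊆ simplexOf e f := by
  classical
  rw [mem_pseudo] at hσ
  obtain ⟨h1, h2⟩ := hσ
  choose d hd using fun k : Fin n => hS (e k) (e k).2
  refine ⟨fun k => if h : ∃ v, ((e k : P), v) ∈ σ then h.choose else d k, fun k => ?_, ?_⟩
  · dsimp only
    by_cases h : ∃ v, ((e k : P), v) ∈ σ
    · rw [dif_pos h]
      exact (h1 _ h.choose_spec).2
    · rw [dif_neg h]; exact hd k
  · intro x hx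
    have hx1 : x.1 ∈ P' := (h1 x hx).1
    set k := e.symm ⟨x.1, hx1⟩ with hkdef
    have hek : ((e k : P)) = x.1 := by rw [hkdef, Equiv.apply_symm_apply]
    have hex : ∃ v, ((e k : P), v) ∈ σ := ⟨x.2, by rw [hek]; exact (Prod.mk.eta ▸ hx)⟩
    rw [mem_simplexOf]
    refine ⟨k, ?_⟩
    rw [dif_pos hex]
    exact h2 _ hex.choose_spec x hx hek

lemma facet_iff (hS : ∀ i ∈ P', (S i).Nonempty) {σ : Finset (P × V)} :
    IsFacet (Pseudosphere P' S) σ ↔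
      ∃ f : Fin n → V, (∀ k, f k ∈ S ((e k : P))) ∧ σ = simplexOf e f := by
  constructor
  · rintro ⟨hmem, hmax⟩
    obtain ⟨f, hf, hsub⟩ := exists_ext (e := e) hS hmem
    exact ⟨f, hf, hmax _ (simplexOf_mem hf) hsub⟩
  · rintro ⟨f, hf, rfl⟩
    refine ⟨simplexOf_mem hf, fun τ hτ hsub => ?_⟩
    obtain ⟨g, hg, hsub'⟩ := exists_ext (e := e) hS hτ
    have : f = g := simplexOf_subset (hsub.trans hsub')
    subst this
    exact Finset.Subset.antisymm hsub (hsub'.trans (le_refl _))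

variable [LinearOrder V]

/-- Hand-rolled lexicographic strict order on `Fin n → V`. -/
def plex (f g : Fin n → V) : Prop :=
  ∃ i, (∀ j, j < i → f j = g j) ∧ f i < g i

lemma plex_trans {f g h : Fin n → V} (h1 : plex f g) (h2 : plex g h) : plex f h := by
  obtain ⟨N₁, lt₁, w₁⟩ := h1
  obtain ⟨N₂, lt₂, w₂⟩ := h2
  rcases lt_trichotomy N₁ N₂ with H | rfl | H
  · exact ⟨N₁, fun j hj => (lt₁ _ hj).trans (lt₂ _ (hj.trans H)), (lt₂ _ H) ▸ w₁⟩
  · exact ⟨N₁, fun j hj => (lt₁ _ hj).trans (lt₂ _ hj), w₁.trans w₂⟩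
  · exact ⟨N₂, fun j hj => (lt₁ _ (hj.trans H)).trans (lt₂ _ hj), (lt₁ _ H).symm ▸ w₂⟩

lemma plex_irrefl (f : Fin n → V) : ¬ plex f f := by
  rintro ⟨i, -, hi⟩
  exact lt_irrefl _ hi

lemma plex_asymm {f g : Fin n → V} (h1 : plex f g) (h2 : plex g f) : False :=
  plex_irrefl f (plex_trans h1 h2)

lemma plex_trichot (f g : Fin n → V) : plex f g ∨ f = g ∨ plex g f := by
  rcases eq_or_ne f g with h | h
  · exact Or.inr (Or.inl h)
  have hne : (Finset.univ.filter fun i => f i ≠ g i).Nonempty := by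
    obtain ⟨i, hi⟩ := Function.ne_iff.1 h
    exact ⟨i, by simp [hi]⟩
  set i0 := (Finset.univ.filter fun i => f i ≠ g i).min' hne with hi0
  have hmem : f i0 ≠ g i0 := by
    have := Finset.min'_mem _ hne
    rw [← hi0] at this
    simpa using this
  have hagree : ∀ j, j < i0 → f j = g j := by
    intro j hj
    by_contra hc
    exact absurd (Finset.min'_le _ j (by simp [hc])) (not_le_of_gt hj)
  rcases lt_or_gt_of_ne hmem with hlt | hgt
  · exact Or.inl ⟨i0, hagree, hlt⟩
  · exact Or.inr (Or.inr ⟨i0, fun j hj => (hagree j hj).symm, hgt⟩)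

lemma key {f : Fin n → V} (hf : ∀ k, f k ∈ S ((e k : P)))
    {τ : Finset (P × V)} (hτ : τ ⊆ simplexOf e f) :
    (∃ g : Fin n → V, (∀ k, g k ∈ S ((e k : P))) ∧ plex g f ∧ τ ⊆ simplexOf e g)
      ↔ ∃ k, ((e k : P), f k) ∉ τ ∧ ∃ w ∈ S ((e k : P)), w < f k := by
  constructor
  · rintro ⟨g, hg, hlt, hsub⟩
    obtain ⟨i, -, hi⟩ := hlt
    refine ⟨i, ?_, g i, hg i, hi⟩
    intro hmem
    obtain ⟨l, hl⟩ := mem_simplexOf.1 (hsub hmem)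
    have : l = i := e.injective (Subtype.coe_injective (congrArg Prod.fst hl))
    subst this
    exact absurd (congrArg Prod.snd hl) (ne_of_lt hi)
  · rintro ⟨k, hk, w, hw, hwlt⟩
    refine ⟨Function.update f k w, fun l => ?_, ?_, ?_⟩
    · by_cases h : l = k
      · subst h; rw [Function.update_self]; exact hw
      · rw [Function.update_of_ne h]; exact hf l
    · exact ⟨k, fun j hj => Function.update_of_ne (ne_of_lt hj) _ _, by
        rw [Function.update_self]; exact hwlt⟩
    · intro x hx
      obtain ⟨l, hl⟩ := mem_simplexOf.1 (hτ hx)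
      have hlk : l ≠ k := by
        rintro rfl
        exact hk (hl ▸ hx)
      rw [mem_simplexOf]
      exact ⟨l, by rw [Function.update_of_ne hlk]; exact hl⟩
end PA

/-- every pseudosphere with nonempty finite index set `P'` and nonempty
value sets `S i` (`i ∈ P'`) is a pure simplicial complex of dimension `|P'| - 1`
(i.e. it has a simplex of cardinality `|P'|` and all its facets have cardinality
`|P'|`) whose facets admit a shelling order. -/
theorem stmt1 {P V : Type*} [DecidableEq P] [DecidableEq V]
    (P' : Finset P) (hP' : P'.Nonempty)
    (S : P → Finset V) (hS : ∀ i ∈ P', (S i).Nonempty) :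
    IsComplex (Pseudosphere P' S) ∧
    (∃ σ ∈ Pseudosphere P' S, σ.card = P'.card) ∧
    (∀ σ, IsFacet (Pseudosphere P' S) σ → σ.card = P'.card) ∧
    IsShellable (Pseudosphere P' S) := by
  classical
  letI : LinearOrder V := IsWellOrder.linearOrder WellOrderingRel
  set n := P'.card with hn
  set e : Fin n ≃ {x // x ∈ P'} := P'.equivFin.symm with he
  set T : Finset (Fin n → V) := Fintype.piFinset (fun k : Fin n => S ((e k : P))) with hTdef
  have hT : ∀ f : Fin n → V, f ∈ T ↔ ∀ k, f k ∈ S ((e k : P)) := fun f => Fintype.mem_piFinset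
  have hTne : T.Nonempty :=
    ⟨fun k => (hS (e k) (e k).2).choose, (hT _).2 fun k => (hS (e k) (e k).2).choose_spec⟩
  have hcomplex : IsComplex (Pseudosphere P' S) := by
    intro σ hσ τ hτ
    rw [mem_pseudo] at hσ ⊢
    exact ⟨fun x hx => hσ.1 x (hτ hx), fun x hx y hy => hσ.2 x (hτ hx) y (hτ hy)⟩
  have hfacet : ∀ σ : Finset (P × V), IsFacet (Pseudosphere P' S) σ ↔
      ∃ f ∈ T, σ = simplexOf e f := by
    intro σ
    rw [facet_iff (e := e) hS]
    constructor
    · rintro ⟨f, hf, rfl⟩; exact ⟨f, (hT f).2 hf, rfl⟩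
    · rintro ⟨f, hf, rfl⟩; exact ⟨f, (hT f).1 hf, rfl⟩
  letI : DecidableRel (fun f g : Fin n → V => plex f g ∨ f = g) := fun _ _ => Classical.dec _
  haveI : IsTrans (Fin n → V) (fun f g => plex f g ∨ f = g) := by
    constructor
    rintro a b c (h1 | rfl) (h2 | rfl)
    · exact Or.inl (plex_trans h1 h2)
    · exact Or.inl h1
    · exact Or.inl h2
    · exact Or.inr rfl
  haveI : IsAntisymm (Fin n → V) (fun f g => plex f g ∨ f = g) := by
    constructor
    rintro a b (h1 | rfl) (h2 | h2)
    · exact absurd h2 (fun h => plex_asymm h1 h)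
    · exact h2.symm
    all_goals rfl
  haveI : IsTotal (Fin n → V) (fun f g => plex f g ∨ f = g) := by
    constructor
    intro a b
    rcases plex_trichot a b with h | h | h
    · exact Or.inl (Or.inl h)
    · exact Or.inl (Or.inr h)
    · exact Or.inr (Or.inl h)
  set L : List (Fin n → V) := T.sort (fun f g => plex f g ∨ f = g) with hLdef
  have hLsort : L.Pairwise (fun f g => plex f g ∨ f = g) := Finset.pairwise_sort T _
  have hLnodup : L.Nodup := Finset.sort_nodup T _
  have hLmem : ∀ f, f ∈ L ↔ f ∈ T := fun f => Finset.mem_sort _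
  have hc : 0 < T.card := Finset.card_pos.2 hTne
  have hLlen : L.length = T.card := Finset.length_sort _
  obtain ⟨t, ht⟩ : ∃ t, t + 1 = L.length := ⟨T.card - 1, by rw [hLlen]; omega⟩
  set G : Fin (t + 1) → (Fin n → V) := fun j => L.get (Fin.cast ht j) with hGdef
  set φ : Fin (t + 1) → Finset (P × V) := fun j => simplexOf e (G j) with hφdef
  have hφ : ∀ j, φ j = simplexOf e (G j) := fun _ => rfl
  have hGmem : ∀ j, G j ∈ T := fun j => (hLmem _).1 (List.get_mem L _)
  have hGinj : ∀ {i j : Fin (t + 1)}, G i = G j → i = j := by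
    intro i j h
    have hmm : Fin.cast ht i = Fin.cast ht j := hLnodup.get_inj_iff.1 h
    have h2 := congrArg Fin.val hmm
    exact Fin.ext h2
  have hGmono : ∀ {i j : Fin (t + 1)}, i < j → plex (G i) (G j) := by
    intro i j hij
    have hle : plex (G i) (G j) ∨ G i = G j := hLsort.rel_get_of_lt hij
    rcases hle with h | h
    · exact h
    · exact absurd (hGinj h) (ne_of_lt hij)
  have hGrev : ∀ {i j : Fin (t + 1)}, plex (G i) (G j) → i < j := by
    intro i j hlt
    by_contra hij
    push_neg at hij
    rcases eq_or_lt_of_le hij with h | h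
    · exact absurd hlt (by rw [h]; exact plex_irrefl _)
    · exact absurd (hGmono h) fun h' => plex_asymm hlt h'
  have hGsurj : ∀ g ∈ T, ∃ j, G j = g := by
    intro g hg
    obtain ⟨m, hm⟩ := List.mem_iff_get.1 ((hLmem g).2 hg)
    exact ⟨Fin.cast ht.symm m, hm⟩
  have hinj : Function.Injective φ := by
    intro i j hij
    exact hGinj (simplexOf_subset (le_of_eq hij))
  have hrange : ∀ σ, IsFacet (Pseudosphere P' S) σ ↔ ∃ i, φ i = σ := by
    intro σ
    rw [hfacet]
    constructor
    · rintro ⟨f, hf, rfl⟩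
      obtain ⟨j, hj⟩ := hGsurj f hf
      exact ⟨j, by rw [hφ, hj]⟩
    · rintro ⟨i, rfl⟩
      exact ⟨G i, hGmem i, rfl⟩
  have hSCmem : ∀ (j : Fin (t + 1)) (τ : Finset (P × V)),
      τ ∈ ShellingComplex φ j ↔ τ ⊆ φ j ∧ ∃ i, i < j ∧ τ ⊆ φ i := by
    intro j τ
    simp [ShellingComplex]
  have hearlier : ∀ (j : Fin (t + 1)) (τ : Finset (P × V)), τ ⊆ φ j →
      ((∃ i, i < j ∧ τ ⊆ φ i) ↔
        ∃ g : Fin n → V, (∀ k, g k ∈ S ((e k : P))) ∧ plex g (G j) ∧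
          τ ⊆ simplexOf e g) := by
    intro j τ hτ
    constructor
    · rintro ⟨i, hij, hsub⟩
      exact ⟨G i, (hT _).1 (hGmem i), hGmono hij, hsub⟩
    · rintro ⟨g, hg, hlt, hsub⟩
      obtain ⟨i, hi⟩ := hGsurj g ((hT g).2 hg)
      exact ⟨i, hGrev (by rw [hi]; exact hlt), by rw [hφ, hi]; exact hsub⟩
  have hSC2 : ∀ (j : Fin (t + 1)) (τ : Finset (P × V)),
      τ ∈ ShellingComplex φ j ↔ τ ⊆ φ j ∧
        ∃ k, ((e k : P), G j k) ∉ τ ∧ ∃ w ∈ S ((e k : P)), w < G j k := by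
    intro j τ
    rw [hSCmem]
    constructor
    · rintro ⟨h1, h2⟩
      refine ⟨h1, (key (e := e) ((hT _).1 (hGmem j)) h1).1 ((hearlier j τ h1).1 h2)⟩
    · rintro ⟨h1, h2⟩
      exact ⟨h1, (hearlier j τ h1).2 ((key (e := e) ((hT _).1 (hGmem j)) h1).2 h2)⟩
  refine ⟨hcomplex, ?_, ?_, t, φ, hinj, hrange, ?_⟩
  · obtain ⟨f, hf⟩ := hTne
    exact ⟨simplexOf e f, simplexOf_mem ((hT f).1 hf), card_simplexOf f⟩
  · intro σ hσ
    obtain ⟨f, hf, rfl⟩ := (hfacet σ).1 hσ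
    exact card_simplexOf f
  · intro j hj
    have hflex : plex (G 0) (G j) := hGmono hj
    obtain ⟨k, -, hk⟩ := hflex
    have hw : ∃ w ∈ S ((e k : P)), w < G j k := ⟨G 0 k, (hT _).1 (hGmem 0) k, hk⟩
    have hmemj : ∀ k' : Fin n, ((e k' : P), G j k') ∈ φ j := by
      intro k'
      rw [hφ]
      exact mem_simplexOf.2 ⟨k', rfl⟩
    constructor
    · refine ⟨(φ j).erase ((e k : P), G j k), ?_, Finset.card_erase_of_mem (hmemj k)⟩
      exact (hSC2 j _).2 ⟨Finset.erase_subset _ _, k, Finset.notMem_erase _ _, hw⟩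
    · rintro τ ⟨hτmem, hτmax⟩
      obtain ⟨hsub, k', hknot, hw'⟩ := (hSC2 j τ).1 hτmem
      have hτ'mem : (φ j).erase ((e k' : P), G j k') ∈ ShellingComplex φ j :=
        (hSC2 j _).2 ⟨Finset.erase_subset _ _, k', Finset.notMem_erase _ _, hw'⟩
      have heq : τ = (φ j).erase ((e k' : P), G j k') :=
        hτmax _ hτ'mem (Finset.subset_erase.2 ⟨hsub, hknot⟩)
      rw [heq, Finset.card_erase_of_mem (hmemj k')]
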